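/- Let Γ be a finite simplicial graph, K ⊆ Γ a clique with vertices v₁,…,v_k, φ : W_Γ → W_K the retraction, and Γ' the finite simplicial graph with vertex set R' = { v(ε) } in bijection with the set R of reduced elements g(ε) v g(ε) (v ∈ V(Γ)\V(K), ε ∈ (ℤ/2)^k), where u(ε₁) and v(ε₂) are joined by an edge iff (u,v) ∈ E(Γ) and there is ε with g(ε₁)u g(ε₁) = g(ε)u g(ε) and g(ε₂)v g(ε₂) = g(ε)v g(ε) in W_Γ. Then the map v(ε) ↦ g(ε) v g(ε) extends to a group isomorphism W_{Γ'} → ker φ; consequently W_Γ and W_{Γ'} are commensurable. -/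

import Mathlib

/-- The defining relators of the right-angled Coxeter group of a simplicial graph `G`. -/
def racgRels {V : Type} (G : SimpleGraph V) : Set (FreeGroup V) :=
  {r | (∃ v : V, r = FreeGroup.of v * FreeGroup.of v) ∨
    ∃ u v : V, G.Adj u v ∧ r = (FreeGroup.of u * FreeGroup.of v) ^ 2}

/-- The right-angled Coxeter group of a finite simplicial graph. -/
abbrev RACG {V : Type} (G : SimpleGraph V) : Type := PresentedGroup (racgRels G)

/-- The element of `W_Γ` represented by a word in the generators. -/
def wordProd {V : Type} (G : SimpleGraph V) (w : List V) : RACG G :=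
  (w.map fun v => (PresentedGroup.of v : RACG G)).prod

/-- The word `v₁^{ε₁} ⋯ v_k^{ε_k}` in the clique generators `v₁, …, v_k` determined by
`ε ∈ (ℤ/2)^k`. -/
def epsWord {V : Type} {k : ℕ} (vv : Fin k → V) (ε : Fin k → ZMod 2) : List V :=
  (List.finRange k).filterMap fun i => if ε i = 1 then some (vv i) else none

/-- The element `g(ε) = v₁^{ε₁} ⋯ v_k^{ε_k}` of `W_Γ`. -/
def gw {V : Type} (G : SimpleGraph V) {k : ℕ} (vv : Fin k → V)
    (ε : Fin k → ZMod 2) : RACG G :=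
  wordProd G (epsWord vv ε)

/-- The pair `(ε, v)` is reduced if the word `g(ε) v g(ε)` cannot be shortened: no strictly
shorter word in the generators represents the same element of `W_Γ`. -/
def IsReducedPair {V : Type} (G : SimpleGraph V) {k : ℕ} (vv : Fin k → V)
    (ε : Fin k → ZMod 2) (v : V) : Prop :=
  ∀ w : List V, wordProd G w = wordProd G (epsWord vv ε ++ v :: epsWord vv ε) →
    (epsWord vv ε ++ v :: epsWord vv ε).length ≤ w.length

/-- The set `R` of elements `g(ε) v g(ε)` (with `v ∈ V(Γ)\V(K)`) whose defining words are
reduced in `W_Γ`; it is the vertex set `R'` of `Γ'` (via the bijection `v(ε) ↦ g(ε) v g(ε)`). -/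
def RSet {V : Type} (G : SimpleGraph V) {k : ℕ} (vv : Fin k → V) : Set (RACG G) :=
  {x | ∃ (ε : Fin k → ZMod 2) (v : V), v ∉ Set.range vv ∧ IsReducedPair G vv ε v ∧
    x = gw G vv ε * PresentedGroup.of v * gw G vv ε}

/-- The graph `Γ'` on the vertex set `R'` ≅ `R`: two vertices `u(ε₁)` and `v(ε₂)` are joined
by an edge iff `(u,v) ∈ E(Γ)` and there is `ε` with `g(ε₁)u g(ε₁) = g(ε)u g(ε)` and
`g(ε₂)v g(ε₂) = g(ε)v g(ε)` in `W_Γ` (stated here directly for the corresponding group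
elements). -/
def gammaPrime {V : Type} (G : SimpleGraph V) {k : ℕ} (vv : Fin k → V) :
    SimpleGraph ↥(RSet G vv) where
  Adj x y := x ≠ y ∧ ∃ (ε : Fin k → ZMod 2) (u v : V), u ∉ Set.range vv ∧
    v ∉ Set.range vv ∧ G.Adj u v ∧
    (x : RACG G) = gw G vv ε * PresentedGroup.of u * gw G vv ε ∧
    (y : RACG G) = gw G vv ε * PresentedGroup.of v * gw G vv ε
  symm := by
    constructor
    rintro x y ⟨hne, ε, u, v, hu, hv, hadj, hx, hy⟩
    exact ⟨hne.symm, ε, v, u, hv, hu, hadj.symm, hy, hx⟩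
  loopless := by constructor; rintro x ⟨hne, -⟩; exact hne rfl

namespace RacgAux

open PresentedGroup

variable {V : Type} {G : SimpleGraph V} {k : ℕ} {vv : Fin k → V}

/-- relators hold -/
lemma of_mul_self (v : V) : (of v * of v : RACG G) = 1 := by
  have h : (FreeGroup.of v * FreeGroup.of v) ∈ Subgroup.normalClosure (racgRels G) :=
    Subgroup.subset_normalClosure (Or.inl ⟨v, rfl⟩)
  have : (mk (racgRels G)) (FreeGroup.of v * FreeGroup.of v) = 1 :=
    (QuotientGroup.eq_one_iff _).2 h
  simpa [PresentedGroup.of] using this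

lemma sq_of (v : V) : (of v : RACG G) ^ 2 = 1 := by
  rw [pow_two]; exact of_mul_self v

lemma inv_of (v : V) : (of v : RACG G)⁻¹ = of v :=
  inv_eq_of_mul_eq_one_right (of_mul_self v)

lemma adj_relator {u v : V} (h : G.Adj u v) :
    ((of u * of v : RACG G)) ^ 2 = 1 := by
  have hm : ((FreeGroup.of u * FreeGroup.of v) ^ 2) ∈ Subgroup.normalClosure (racgRels G) :=
    Subgroup.subset_normalClosure (Or.inr ⟨u, v, h, rfl⟩)
  have : (mk (racgRels G)) ((FreeGroup.of u * FreeGroup.of v) ^ 2) = 1 :=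
    (QuotientGroup.eq_one_iff _).2 hm
  simpa [PresentedGroup.of] using this

lemma of_comm {u v : V} (h : G.Adj u v) :
    Commute (of u : RACG G) (of v) := by
  have h2 := adj_relator (G := G) h
  have : (of u * of v : RACG G) = (of u * of v)⁻¹ := by
    rw [eq_comm, inv_eq_iff_mul_eq_one, ← pow_two]; exact h2
  rw [mul_inv_rev, inv_of, inv_of] at this
  unfold Commute SemiconjBy
  rw [this]

lemma wordProd_nil : wordProd G ([] : List V) = 1 := rfl

lemma wordProd_cons (v : V) (w : List V) :
    wordProd G (v :: w) = of v * wordProd G w := by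
  simp [wordProd]

lemma wordProd_append (w₁ w₂ : List V) :
    wordProd G (w₁ ++ w₂) = wordProd G w₁ * wordProd G w₂ := by
  simp [wordProd]

end RacgAux
namespace RacgAux

open PresentedGroup

variable {V : Type} {G : SimpleGraph V} {k : ℕ} {vv : Fin k → V}

lemma zmod2_cases (a : ZMod 2) : a = 0 ∨ a = 1 := by revert a; decide

lemma epsWord_eq_filter (ε : Fin k → ZMod 2) :
    epsWord vv ε = ((List.finRange k).filter (fun i => ε i = 1)).map vv := by
  unfold epsWord
  induction (List.finRange k) with
  | nil => rfl
  | cons i l ih =>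
    by_cases h : ε i = 1 <;> simp [h, ih]

lemma gw_eq_prod (ε : Fin k → ZMod 2) :
    gw G vv ε = ((List.finRange k).map fun i => (of (vv i) : RACG G) ^ (ε i).val).prod := by
  unfold gw wordProd
  rw [epsWord_eq_filter]
  induction (List.finRange k) with
  | nil => rfl
  | cons i l ih =>
    rw [List.filter_cons]
    rcases zmod2_cases (ε i) with h | h
    · have : ¬ (ε i = 1) := by rw [h]; decide
      simp only [h, List.map_cons, List.prod_cons, decide_eq_true_eq, this, if_false,
        ZMod.val_zero, pow_zero, one_mul]
      exact ih
    · simp only [h, decide_eq_true_eq, if_pos, List.map_cons, List.prod_cons,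
        ZMod.val_one, pow_one]
      rw [ih]

lemma of_vv_comm (hclique : ∀ i j : Fin k, i ≠ j → G.Adj (vv i) (vv j)) (i j : Fin k) :
    Commute (of (vv i) : RACG G) (of (vv j)) := by
  by_cases h : i = j
  · subst h; exact Commute.refl _
  · exact of_comm (hclique i j h)

lemma prod_comm_of_vv (hclique : ∀ i j : Fin k, i ≠ j → G.Adj (vv i) (vv j))
    (i : Fin k) (l : List (Fin k)) (ε : Fin k → ZMod 2) :
    Commute (of (vv i) : RACG G)
      ((l.map fun j => (of (vv j) : RACG G) ^ (ε j).val).prod) := by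
  apply Commute.list_prod_right
  intro x hx
  simp only [List.mem_map] at hx
  obtain ⟨j, -, rfl⟩ := hx
  exact (of_vv_comm hclique i j).pow_right _

lemma gw_mul_gw (hclique : ∀ i j : Fin k, i ≠ j → G.Adj (vv i) (vv j))
    (ε ε' : Fin k → ZMod 2) :
    gw G vv ε * gw G vv ε' = gw G vv (ε + ε') := by
  rw [gw_eq_prod, gw_eq_prod, gw_eq_prod]
  induction (List.finRange k) with
  | nil => simp
  | cons i l ih =>
    simp only [List.map_cons, List.prod_cons]
    have hc : Commute ((l.map fun j => (of (vv j) : RACG G) ^ (ε j).val).prod)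
        ((of (vv i) : RACG G) ^ (ε' i).val) :=
      (prod_comm_of_vv hclique i l ε).symm.pow_right _
    rw [hc.mul_mul_mul_comm, ih]
    congr 1
    have hsq : (of (vv i) : RACG G) ^ 2 = 1 := sq_of _
    rcases zmod2_cases (ε i) with h | h <;> rcases zmod2_cases (ε' i) with h' | h' <;>
      simp [h, h', Pi.add_apply, ZMod.val_one, ZMod.val_zero, ← pow_add] <;>
      first
        | rfl
        | (rw [show ((1 : ZMod 2) + 1) = 0 by decide]; simp [hsq, ← pow_two])

lemma gw_zero : gw G vv (0 : Fin k → ZMod 2) = (1 : RACG G) := by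
  rw [gw_eq_prod]
  simp

lemma gw_mul_self (hclique : ∀ i j : Fin k, i ≠ j → G.Adj (vv i) (vv j))
    (ε : Fin k → ZMod 2) : gw G vv ε * gw G vv ε = 1 := by
  rw [gw_mul_gw hclique]
  have : ε + ε = 0 := by
    funext i
    simp only [Pi.add_apply, Pi.zero_apply]
    rcases zmod2_cases (ε i) with h | h <;> rw [h] <;> decide
  rw [this, gw_zero]

lemma gw_inv (hclique : ∀ i j : Fin k, i ≠ j → G.Adj (vv i) (vv j))
    (ε : Fin k → ZMod 2) : (gw G vv ε)⁻¹ = gw G vv ε :=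
  inv_eq_of_mul_eq_one_right (gw_mul_self hclique ε)

lemma filter_eq_single {α : Type*} [DecidableEq α] :
    ∀ l : List α, l.Nodup → ∀ a ∈ l, l.filter (fun b => b = a) = [a] := by
  intro l
  induction l with
  | nil => intro _ a ha; cases ha
  | cons x l ih =>
    intro hnd a ha
    rw [List.nodup_cons] at hnd
    rw [List.filter_cons]
    rcases List.mem_cons.1 ha with rfl | hal
    · have : l.filter (fun b => b = a) = [] := by
        apply List.filter_eq_nil_iff.2
        intro b hb
        simp only [decide_eq_true_eq]
        rintro rfl
        exact hnd.1 hb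
      simp [this]
    · have hxa : x ≠ a := by rintro rfl; exact hnd.1 hal
      simp only [decide_eq_true_eq, hxa, if_false]
      exact ih hnd.2 a hal

lemma epsWord_eq_single (i : Fin k) (ε : Fin k → ZMod 2) (hε : ∀ j, ε j = 1 ↔ j = i) :
    epsWord vv ε = [vv i] := by
  rw [epsWord_eq_filter]
  have hp : (fun j => decide (ε j = 1)) = (fun j : Fin k => decide (j = i)) := by
    funext j
    exact decide_eq_decide.2 (hε j)
  show ((List.finRange k).filter fun j => decide (ε j = 1)).map vv = [vv i]
  rw [hp, filter_eq_single _ (List.nodup_finRange k) i (List.mem_finRange i)]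
  rfl

lemma single_eq_one_iff (i j : Fin k) :
    (Pi.single i 1 : Fin k → ZMod 2) j = 1 ↔ j = i := by
  rcases eq_or_ne j i with h | h
  · subst h; simp
  · simp [Pi.single_apply, h]

lemma epsWord_single (i : Fin k) :
    epsWord vv (Pi.single i (1 : ZMod 2)) = [vv i] :=
  epsWord_eq_single i _ (single_eq_one_iff i)

lemma gw_single (i : Fin k) :
    gw G vv (Pi.single i (1 : ZMod 2)) = (of (vv i) : RACG G) := by
  unfold gw
  rw [epsWord_single]
  simp [wordProd]

end RacgAux
namespace RacgAux

open PresentedGroup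

variable {V : Type} {G : SimpleGraph V} {k : ℕ} {vv : Fin k → V}

lemma prod_map_ofAdd {ι : Type*} {A : Type*} [AddCommMonoid A] (g : ι → A) (l : List ι) :
    (l.map fun i => Multiplicative.ofAdd (g i)).prod =
      Multiplicative.ofAdd (l.map g).sum := by
  induction l with
  | nil => rfl
  | cons i l ih => simp [ih]

lemma sum_val_single (ε : Fin k → ZMod 2) :
    (((List.finRange k).map fun i =>
      (ε i).val • (Pi.single i 1 : Fin k → ZMod 2)).sum) = ε := by
  rw [← Fin.sum_univ_def]
  have : ∀ i : Fin k, (ε i).val • (Pi.single i 1 : Fin k → ZMod 2) =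
      Pi.single i (ε i) := by
    intro i
    rw [← Pi.single_smul]
    have h2 : ∀ a : ZMod 2, a.val • (1 : ZMod 2) = a := by decide
    rw [h2]
  simp_rw [this]
  exact Finset.univ_sum_single ε

lemma map_gw {H : Type*} [Group H] (F : RACG G →* H)
    (hA : Multiplicative (Fin k → ZMod 2) →* H) (ε : Fin k → ZMod 2)
    (h : ∀ i, ε i = 1 → F (of (vv i)) = hA (Multiplicative.ofAdd (Pi.single i 1))) :
    F (gw G vv ε) = hA (Multiplicative.ofAdd ε) := by
  rw [gw_eq_prod, map_list_prod, List.map_map]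
  have : ((fun x => F x) ∘ fun i => (of (vv i) : RACG G) ^ (ε i).val) =
      fun i => hA (Multiplicative.ofAdd ((ε i).val • (Pi.single i 1 : Fin k → ZMod 2))) := by
    funext i
    simp only [Function.comp_apply, map_pow]
    rcases zmod2_cases (ε i) with h0 | h1
    · rw [h0]
      simp
    · rw [h1, h i h1]
      simp [ZMod.val_one]
  rw [this]
  have : (fun i => hA (Multiplicative.ofAdd ((ε i).val • (Pi.single i 1 : Fin k → ZMod 2)))) =
      (fun x => hA x) ∘ (fun i => Multiplicative.ofAdd ((ε i).val • (Pi.single i 1 : Fin k → ZMod 2))) := rfl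
  rw [this, ← List.map_map, ← map_list_prod, prod_map_ofAdd, sum_val_single]

end RacgAux
namespace RacgAux

open PresentedGroup

variable {k : ℕ}

abbrev Avec (k : ℕ) := Fin k → ZMod 2

lemma avec_add_self (a : Avec k) : a + a = 0 := by
  funext i
  have : ∀ z : ZMod 2, z + z = 0 := by decide
  exact this (a i)

/-- weight of a vector -/
def wtv (a : Avec k) : ℕ := ((List.finRange k).filter fun i => a i = 1).length

lemma wtv_zero : wtv (0 : Avec k) = 0 := by
  unfold wtv
  rw [List.filter_eq_nil_iff.2]
  · rfl
  · intro i _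
    simp

lemma countP_le_countP_add_count {α : Type*} [DecidableEq α] (p p' : α → Bool) (i : α)
    (h : ∀ x, x ≠ i → p' x = p x) :
    ∀ l : List α, l.countP p' ≤ l.countP p + l.count i := by
  intro l
  induction l with
  | nil => simp
  | cons x t ih =>
    by_cases hx : x = i
    · subst hx
      rw [List.countP_cons, List.countP_cons, List.count_cons_self]
      have h1 : (if p' x = true then 1 else 0) ≤ 1 := by split <;> simp
      omega
    · rw [List.countP_cons, List.countP_cons, List.count_cons_of_ne hx, h x hx]
      omega

lemma wtv_single_add (i : Fin k) (a : Avec k) :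
    wtv ((Pi.single i 1 : Avec k) + a) ≤ wtv a + 1 := by
  unfold wtv
  rw [← List.countP_eq_length_filter, ← List.countP_eq_length_filter]
  have hcnt : (List.finRange k).count i = 1 :=
    List.count_eq_one_of_mem (List.nodup_finRange k) (List.mem_finRange i)
  have := countP_le_countP_add_count (fun j => decide (a j = 1))
    (fun j => decide (((Pi.single i 1 : Avec k) + a) j = 1)) i
    (fun x hx => by
      show decide (((Pi.single i 1 : Avec k) + a) x = 1) = decide (a x = 1)
      simp [Pi.single_apply, hx]) (List.finRange k)
  rw [hcnt] at this
  exact this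

/-- the constraint on lists: nonempty, and interior entries nonzero -/
def okL (l : List (Avec k)) : Prop := l ≠ [] ∧ ∀ a ∈ l.tail.dropLast, a ≠ 0

/-- the state space -/
def XCar (k : ℕ) := {l : List (Avec k) // okL l}

/-- add `b` to the head -/
def modHead (b : Avec k) : List (Avec k) → List (Avec k)
  | [] => []
  | a :: t => (b + a) :: t

lemma modHead_okL (b : Avec k) {l : List (Avec k)} (h : okL l) : okL (modHead b l) := by
  obtain ⟨hne, hint⟩ := h
  cases l with
  | nil => exact absurd rfl hne
  | cons a t => exact ⟨List.cons_ne_nil _ _, hint⟩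

lemma modHead_modHead (b : Avec k) (l : List (Avec k)) :
    modHead b (modHead b l) = l := by
  cases l with
  | nil => rfl
  | cons a t =>
    show (b + (b + a)) :: t = a :: t
    rw [← add_assoc, avec_add_self, zero_add]

/-- the `v`-action on lists -/
def vMap : List (Avec k) → List (Avec k)
  | [] => []
  | [a] => [0, a]
  | a :: b :: t => if a = 0 then b :: t else 0 :: a :: b :: t

lemma vMap_cons_pos {a b : Avec k} {t : List (Avec k)} (ha : a = 0) :
    vMap (a :: b :: t) = b :: t := by
  show (if a = 0 then b :: t else 0 :: a :: b :: t) = b :: t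
  exact if_pos ha

lemma vMap_cons_neg {a b : Avec k} {t : List (Avec k)} (ha : ¬ a = 0) :
    vMap (a :: b :: t) = 0 :: a :: b :: t := by
  show (if a = 0 then b :: t else 0 :: a :: b :: t) = 0 :: a :: b :: t
  exact if_neg ha

lemma vMap_okL {l : List (Avec k)} (h : okL l) : okL (vMap l) := by
  obtain ⟨hne, hint⟩ := h
  match l with
  | [] => exact absurd rfl hne
  | [a] =>
    refine ⟨by simp [vMap], ?_⟩
    intro x hx
    simp [vMap] at hx
  | a :: b :: t =>
    by_cases ha : a = 0
    · rw [vMap_cons_pos ha]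
      refine ⟨List.cons_ne_nil _ _, ?_⟩
      intro x hx
      apply hint
      simp only [List.tail_cons] at hx ⊢
      cases t with
      | nil => simp at hx
      | cons c t' =>
        rw [List.dropLast_cons₂]
        exact List.mem_cons_of_mem _ hx
    · rw [vMap_cons_neg ha]
      refine ⟨List.cons_ne_nil _ _, ?_⟩
      intro x hx
      simp only [List.tail_cons] at hx
      rw [List.dropLast_cons₂] at hx
      rcases List.mem_cons.1 hx with rfl | hx'
      · exact ha
      · exact hint x (by simpa using hx')

lemma vMap_vMap {l : List (Avec k)} (h : okL l) : vMap (vMap l) = l := by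
  obtain ⟨hne, hint⟩ := h
  match l with
  | [] => exact absurd rfl hne
  | [a] =>
    rw [show vMap [a] = [0, a] from rfl, vMap_cons_pos rfl]
  | a :: b :: t =>
    by_cases ha : a = 0
    · rw [vMap_cons_pos ha]
      cases t with
      | nil =>
        rw [show vMap [b] = [0, b] from rfl]
        rw [← ha]
      | cons c t' =>
        have hb : b ≠ 0 := by
          apply hint
          simp [List.dropLast_cons₂]
        rw [vMap_cons_neg hb, ← ha]
    · rw [vMap_cons_neg ha, vMap_cons_pos rfl]

/-- head-addition as a permutation -/
def headAddE (b : Avec k) : Equiv.Perm (XCar k) where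
  toFun x := ⟨modHead b x.1, modHead_okL b x.2⟩
  invFun x := ⟨modHead b x.1, modHead_okL b x.2⟩
  left_inv x := Subtype.ext (modHead_modHead b x.1)
  right_inv x := Subtype.ext (modHead_modHead b x.1)

/-- the `v`-permutation -/
def vPerm : Equiv.Perm (XCar k) where
  toFun x := ⟨vMap x.1, vMap_okL x.2⟩
  invFun x := ⟨vMap x.1, vMap_okL x.2⟩
  left_inv x := Subtype.ext (vMap_vMap x.2)
  right_inv x := Subtype.ext (vMap_vMap x.2)

lemma headAddE_apply (b : Avec k) (x : XCar k) :
    ((headAddE b) x).1 = modHead b x.1 := rfl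

lemma vPerm_apply (x : XCar k) : ((vPerm) x).1 = vMap x.1 := rfl

lemma headAddE_mul (b c : Avec k) :
    (headAddE b) * (headAddE c) = headAddE (b + c) := by
  ext x
  apply Subtype.ext
  show modHead b (modHead c x.1) = modHead (b + c) x.1
  cases x.1 with
  | nil => rfl
  | cons a t =>
    show (b + (c + a)) :: t = ((b + c) + a) :: t
    rw [add_assoc]

lemma headAddE_zero : (headAddE (0 : Avec k)) = 1 := by
  ext x
  apply Subtype.ext
  show modHead 0 x.1 = x.1
  cases x.1 with
  | nil => rfl
  | cons a t => show (0 + a) :: t = a :: t; rw [zero_add]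

lemma headAddE_sq (b : Avec k) : (headAddE b) * (headAddE b) = 1 := by
  rw [headAddE_mul, avec_add_self, headAddE_zero]

lemma vPerm_sq : (vPerm : Equiv.Perm (XCar k)) * vPerm = 1 := by
  ext x
  apply Subtype.ext
  show vMap (vMap x.1) = x.1
  exact vMap_vMap x.2

/-- norm on lists -/
def nrmL (l : List (Avec k)) : ℕ := (l.map wtv).sum + (l.length - 1)

lemma nrmL_modHead_single (i : Fin k) (l : List (Avec k)) :
    nrmL (modHead (Pi.single i 1) l) ≤ nrmL l + 1 := by
  cases l with
  | nil => simp [nrmL, modHead]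
  | cons a t =>
    show nrmL ((Pi.single i 1 + a) :: t) ≤ nrmL (a :: t) + 1
    simp only [nrmL, List.map_cons, List.sum_cons, List.length_cons]
    have := wtv_single_add i a
    omega

lemma nrmL_vMap (l : List (Avec k)) : nrmL (vMap l) ≤ nrmL l + 1 := by
  match l with
  | [] => simp [nrmL, vMap]
  | [a] =>
    show nrmL [0, a] ≤ nrmL [a] + 1
    simp [nrmL, wtv_zero]
  | a :: b :: t =>
    by_cases ha : a = 0
    · rw [vMap_cons_pos ha]
      subst ha
      simp [nrmL, wtv_zero]
      omega
    · rw [vMap_cons_neg ha]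
      simp [nrmL, wtv_zero]
      omega

end RacgAux
namespace RacgAux

open PresentedGroup

variable {V : Type} {G : SimpleGraph V} {k : ℕ} {vv : Fin k → V}

open scoped Classical in
/-- letters for the geodesic-counting action -/
noncomputable def geoLetter (vv : Fin k → V) (ε : Fin k → ZMod 2) (v : V) :
    V → Equiv.Perm (XCar k) := fun u =>
  if u = v then vPerm
  else if h : ∃ i, ε i = 1 ∧ vv i = u then headAddE (Pi.single h.choose 1)
  else 1

lemma geoLetter_apply_v (ε : Fin k → ZMod 2) (v : V) :
    geoLetter vv ε v v = vPerm := by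
  unfold geoLetter
  rw [if_pos rfl]

lemma geoLetter_apply_vv (hinj : Function.Injective vv) (hv : v ∉ Set.range vv)
    {ε : Fin k → ZMod 2} {i : Fin k} (hi : ε i = 1) :
    geoLetter vv ε v (vv i) = headAddE (Pi.single i 1) := by
  unfold geoLetter
  have h1 : ¬ (vv i = v) := fun h => hv ⟨i, h⟩
  rw [if_neg h1]
  have h : ∃ j, ε j = 1 ∧ vv j = vv i := ⟨i, hi, rfl⟩
  rw [dif_pos h]
  congr 1
  have := h.choose_spec.2
  have : h.choose = i := hinj this
  rw [this]

lemma geoLetter_apply_other {ε : Fin k → ZMod 2} {v u : V} (hu : ¬ u = v)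
    (h : ¬ ∃ i, ε i = 1 ∧ vv i = u) : geoLetter vv ε v u = 1 := by
  unfold geoLetter
  rw [if_neg hu, dif_neg h]

lemma headAddE_comm (b c : Avec k) : Commute (headAddE b) (headAddE c) := by
  unfold Commute SemiconjBy
  rw [headAddE_mul, headAddE_mul, add_comm]

lemma geoLetter_sq (ε : Fin k → ZMod 2) (v u : V) :
    geoLetter vv ε v u * geoLetter vv ε v u = 1 := by
  unfold geoLetter
  split
  · exact vPerm_sq
  · split
    · exact headAddE_sq _
    · simp

lemma comm_sq_rel {H : Type*} [Group H] {a b : H} (hc : Commute a b)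
    (ha : a * a = 1) (hb : b * b = 1) : (a * b) ^ 2 = 1 := by
  rw [pow_two, mul_assoc, ← mul_assoc b a b, ← hc.eq, mul_assoc, hb, mul_one, ha]

lemma geoLetter_comm {ε : Fin k → ZMod 2} {v : V}
    (hna : ∀ i, ε i = 1 → ¬ G.Adj (vv i) v)
    {u u' : V} (hadj : G.Adj u u') :
    Commute (geoLetter vv ε v u) (geoLetter vv ε v u') := by
  by_cases hu : u = v <;> by_cases hu' : u' = v
  · rw [hu, hu']
  · by_cases h' : ∃ i, ε i = 1 ∧ vv i = u'
    · exfalso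
      obtain ⟨i, hi, hvi⟩ := h'
      apply hna i hi
      rw [hvi]
      subst hu
      exact hadj.symm
    · rw [geoLetter_apply_other hu' h']
      exact Commute.one_right _
  · by_cases h : ∃ i, ε i = 1 ∧ vv i = u
    · exfalso
      obtain ⟨i, hi, hvi⟩ := h
      apply hna i hi
      rw [hvi]
      subst hu'
      exact hadj
    · rw [geoLetter_apply_other hu h]
      exact Commute.one_left _
  · by_cases h : ∃ i, ε i = 1 ∧ vv i = u
    · by_cases h' : ∃ i, ε i = 1 ∧ vv i = u'
      · unfold geoLetter
        rw [if_neg hu, if_neg hu', dif_pos h, dif_pos h']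
        exact headAddE_comm _ _
      · rw [geoLetter_apply_other hu' h']
        exact Commute.one_right _
    · rw [geoLetter_apply_other hu h]
      exact Commute.one_left _

lemma geoRels {ε : Fin k → ZMod 2} {v : V}
    (hna : ∀ i, ε i = 1 → ¬ G.Adj (vv i) v) :
    ∀ r ∈ racgRels G, FreeGroup.lift (geoLetter vv ε v) r = 1 := by
  rintro r (⟨u, rfl⟩ | ⟨u, u', hadj, rfl⟩)
  · rw [map_mul, FreeGroup.lift_apply_of]
    exact geoLetter_sq ε v u
  · rw [map_pow, map_mul, FreeGroup.lift_apply_of]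
    exact comm_sq_rel (geoLetter_comm hna hadj) (geoLetter_sq ε v u) (geoLetter_sq ε v u')

/-- the geodesic lemma: if no support letter is adjacent to `v`, the pair is reduced. -/
lemma isReducedPair_of_nonadj (hinj : Function.Injective vv)
    {ε : Fin k → ZMod 2} {v : V} (hv : v ∉ Set.range vv)
    (hna : ∀ i, ε i = 1 → ¬ G.Adj (vv i) v) :
    IsReducedPair G vv ε v := by
  intro w hw
  set ρ : RACG G →* Equiv.Perm (XCar k) := PresentedGroup.toGroup (geoRels hna) with hρ
  have hρ_of : ∀ u : V, ρ (of u) = geoLetter vv ε v u := fun u => PresentedGroup.toGroup.of _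
  -- the head-add homomorphism
  set hA : Multiplicative (Avec k) →* Equiv.Perm (XCar k) :=
    MonoidHom.mk' (fun q => headAddE q.toAdd)
      (fun a b => (headAddE_mul _ _).symm) with hhA
  have hgw : ρ (gw G vv ε) = headAddE ε := by
    rw [map_gw ρ hA ε]
    · rfl
    · intro i hi
      rw [hρ_of, geoLetter_apply_vv hinj hv hi]
      rfl
  -- norm bounds
  have hstep : ∀ u : V, ∀ x : XCar k, nrmL ((ρ (of u)) x).1 ≤ nrmL x.1 + 1 := by
    intro u x
    rw [hρ_of]
    unfold geoLetter
    split
    · exact nrmL_vMap x.1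
    · split
      · exact nrmL_modHead_single _ x.1
      · simp
  have hbound : ∀ w' : List V, ∀ x : XCar k,
      nrmL ((ρ (wordProd G w')) x).1 ≤ w'.length + nrmL x.1 := by
    intro w'
    induction w' with
    | nil =>
      intro x
      rw [show wordProd G ([] : List V) = 1 from rfl, map_one]
      simp
    | cons u t ih =>
      intro x
      rw [wordProd_cons, map_mul]
      calc nrmL ((ρ (of u) * ρ (wordProd G t)) x).1
          = nrmL ((ρ (of u)) ((ρ (wordProd G t)) x)).1 := rfl
        _ ≤ nrmL ((ρ (wordProd G t)) x).1 + 1 := hstep u _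
        _ ≤ (t.length + nrmL x.1) + 1 := by have := ih x; omega
        _ = (u :: t).length + nrmL x.1 := by simp [List.length_cons]; omega
  -- base point
  have hok : okL ([(0 : Avec k)]) := ⟨List.cons_ne_nil _ _, by simp⟩
  set x0 : XCar k := ⟨[0], hok⟩ with hx0
  -- compute the action of the target element
  have htarget : wordProd G (epsWord vv ε ++ v :: epsWord vv ε) =
      gw G vv ε * of v * gw G vv ε := by
    rw [wordProd_append, wordProd_cons, ← mul_assoc]
    rfl
  have heval : (((ρ (wordProd G (epsWord vv ε ++ v :: epsWord vv ε)))) x0).1 = [ε, ε] := by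
    rw [htarget, map_mul, map_mul, hgw, hρ_of v, geoLetter_apply_v]
    show (headAddE ε ((vPerm) ((headAddE ε) x0))).1 = [ε, ε]
    have h1 : ((headAddE ε) x0).1 = [ε] := by
      show modHead ε [0] = [ε]
      show (ε + 0) :: ([] : List (Avec k)) = [ε]
      rw [add_zero]
    have h2 : ((vPerm) ((headAddE ε) x0)).1 = [0, ε] := by
      show vMap (((headAddE ε) x0)).1 = [0, ε]
      rw [h1]
      rfl
    show modHead ε ((vPerm) ((headAddE ε) x0)).1 = [ε, ε]
    rw [h2]
    show (ε + 0) :: [ε] = [ε, ε]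
    rw [add_zero]
  -- length of the target word
  have hlen : (epsWord vv ε ++ v :: epsWord vv ε).length = 2 * wtv ε + 1 := by
    rw [List.length_append, List.length_cons]
    have : (epsWord vv ε).length = wtv ε := by
      rw [epsWord_eq_filter, List.length_map]
      rfl
    omega
  -- conclude
  have hfin := hbound w x0
  rw [hw, ] at hfin
  rw [show nrmL x0.1 = 0 from by simp [nrmL, wtv_zero, hx0]] at hfin
  have : nrmL (((ρ (wordProd G (epsWord vv ε ++ v :: epsWord vv ε)))) x0).1
      = 2 * wtv ε + 1 := by
    rw [heval]
    simp [nrmL]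
    omega
  omega

end RacgAux
namespace RacgAux

open PresentedGroup

variable {V : Type} {G : SimpleGraph V} {k : ℕ} {vv : Fin k → V}

lemma gw_commute_of (ε : Fin k → ZMod 2) (u : V)
    (h : ∀ i, ε i = 1 → G.Adj (vv i) u) :
    Commute (gw G vv ε) (of u : RACG G) := by
  rw [gw_eq_prod]
  apply Commute.list_prod_left
  intro x hx
  simp only [List.mem_map] at hx
  obtain ⟨i, -, rfl⟩ := hx
  rcases zmod2_cases (ε i) with h0 | h1
  · rw [h0]
    show Commute ((of (vv i) : RACG G) ^ (0 : ZMod 2).val) _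
    rw [ZMod.val_zero, pow_zero]
    exact Commute.one_left _
  · exact (of_comm (h i h1)).pow_left _

open scoped Classical in
/-- remove the coordinates adjacent to `u` -/
noncomputable def redEps (G : SimpleGraph V) (vv : Fin k → V) (u : V)
    (ε : Fin k → ZMod 2) : Fin k → ZMod 2 := fun i => if G.Adj (vv i) u then 0 else ε i

open scoped Classical in
noncomputable def adjEps (G : SimpleGraph V) (vv : Fin k → V) (u : V)
    (ε : Fin k → ZMod 2) : Fin k → ZMod 2 := fun i => if G.Adj (vv i) u then ε i else 0

lemma redEps_nonadj (u : V) (ε : Fin k → ZMod 2) :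
    ∀ i, redEps G vv u ε i = 1 → ¬ G.Adj (vv i) u := by
  intro i hi hadj
  unfold redEps at hi
  rw [if_pos hadj] at hi
  exact absurd hi (by decide)

lemma absorb (hclique : ∀ i j : Fin k, i ≠ j → G.Adj (vv i) (vv j))
    (ε : Fin k → ZMod 2) (u : V) :
    gw G vv ε * of u * gw G vv ε =
      gw G vv (redEps G vv u ε) * of u * gw G vv (redEps G vv u ε) := by
  classical
  set r := redEps G vv u ε with hr
  set a := adjEps G vv u ε with ha
  have hsplit : r + a = ε := by
    funext i
    show (if G.Adj (vv i) u then 0 else ε i) + (if G.Adj (vv i) u then ε i else 0) = ε i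
    split <;> simp
  have hgw : gw G vv ε = gw G vv r * gw G vv a := by
    rw [gw_mul_gw hclique, hsplit]
  have hca : Commute (gw G vv a) (of u : RACG G) := by
    apply gw_commute_of
    intro i hi
    by_contra hadj
    have : a i = 0 := by
      show (if G.Adj (vv i) u then ε i else 0) = 0
      rw [if_neg hadj]
    rw [this] at hi
    exact absurd hi (by decide)
  have hcr : gw G vv r * gw G vv a = gw G vv a * gw G vv r := by
    rw [gw_mul_gw hclique, gw_mul_gw hclique, add_comm]
  have haa : gw G vv a * gw G vv a = 1 := gw_mul_self hclique a
  calc gw G vv ε * of u * gw G vv ε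
      = gw G vv r * gw G vv a * of u * (gw G vv a * gw G vv r) := by
        rw [hgw, hcr]
    _ = gw G vv r * (gw G vv a * of u) * gw G vv a * gw G vv r := by
        group
    _ = gw G vv r * (of u * gw G vv a) * gw G vv a * gw G vv r := by
        rw [hca.eq]
    _ = gw G vv r * of u * (gw G vv a * gw G vv a) * gw G vv r := by
        group
    _ = gw G vv r * of u * gw G vv r := by
        rw [haa, mul_one]

lemma mem_RSet (hinj : Function.Injective vv)
    (hclique : ∀ i j : Fin k, i ≠ j → G.Adj (vv i) (vv j))
    {v : V} (hv : v ∉ Set.range vv) (ε : Fin k → ZMod 2) :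
    gw G vv ε * of v * gw G vv ε ∈ RSet G vv := by
  refine ⟨redEps G vv v ε, v, hv, ?_, absorb hclique ε v⟩
  apply isReducedPair_of_nonadj hinj hv
  intro i hi
  exact redEps_nonadj v ε i hi

lemma of_mem_RSet (hinj : Function.Injective vv)
    (hclique : ∀ i j : Fin k, i ≠ j → G.Adj (vv i) (vv j))
    {v : V} (hv : v ∉ Set.range vv) :
    (of v : RACG G) ∈ RSet G vv := by
  have := mem_RSet hinj hclique hv 0
  rwa [gw_zero, one_mul, mul_one] at this

lemma conj_mem_RSet (hinj : Function.Injective vv)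
    (hclique : ∀ i j : Fin k, i ≠ j → G.Adj (vv i) (vv j))
    (ε₀ : Fin k → ZMod 2) {x : RACG G} (hx : x ∈ RSet G vv) :
    gw G vv ε₀ * x * gw G vv ε₀ ∈ RSet G vv := by
  obtain ⟨ε, v, hv, -, rfl⟩ := hx
  have : gw G vv ε₀ * (gw G vv ε * of v * gw G vv ε) * gw G vv ε₀ =
      gw G vv (ε₀ + ε) * of v * gw G vv (ε + ε₀) := by
    rw [← gw_mul_gw hclique, ← gw_mul_gw hclique]
    group
  rw [this, show ε + ε₀ = ε₀ + ε from add_comm _ _]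
  exact mem_RSet hinj hclique hv (ε₀ + ε)

end RacgAux
namespace RacgAux

open PresentedGroup

variable {V : Type} {G : SimpleGraph V} {k : ℕ} {vv : Fin k → V}

lemma sandwich_sq {H : Type*} [Group H] {a b : H} (ha : a * a = 1) (hb : b * b = 1) :
    (a * b * a) * (a * b * a) = 1 := by
  calc (a * b * a) * (a * b * a) = a * (b * ((a * a) * b)) * a := by group
    _ = a * (b * b) * a := by rw [ha, one_mul]
    _ = a * a := by rw [hb, mul_one]
    _ = 1 := ha

lemma sandwich_pair_sq {H : Type*} [Group H] {a b c : H} (ha : a * a = 1)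
    (hbc : (b * c) ^ 2 = 1) :
    ((a * b * a) * (a * c * a)) ^ 2 = 1 := by
  have h1 : (a * b * a) * (a * c * a) = a * (b * ((a*a) * c)) * a := by group
  rw [h1, ha, one_mul, pow_two]
  exact sandwich_sq ha (by rw [← pow_two]; exact hbc)

lemma conj_gw_sandwich (hclique : ∀ i j : Fin k, i ≠ j → G.Adj (vv i) (vv j))
    (ε₀ ε : Fin k → ZMod 2) (z : RACG G) :
    gw G vv ε₀ * (gw G vv ε * z * gw G vv ε) * gw G vv ε₀ =
      gw G vv (ε₀ + ε) * z * gw G vv (ε₀ + ε) := by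
  have hcomm : gw G vv ε * gw G vv ε₀ = gw G vv ε₀ * gw G vv ε := by
    rw [gw_mul_gw hclique, gw_mul_gw hclique, add_comm]
  rw [← gw_mul_gw hclique]
  calc gw G vv ε₀ * (gw G vv ε * z * gw G vv ε) * gw G vv ε₀
      = gw G vv ε₀ * gw G vv ε * z * (gw G vv ε * gw G vv ε₀) := by group
    _ = gw G vv ε₀ * gw G vv ε * z * (gw G vv ε₀ * gw G vv ε) := by rw [hcomm]

section Assembly

variable (hinj : Function.Injective vv)
  (hclique : ∀ i j : Fin k, i ≠ j → G.Adj (vv i) (vv j))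

lemma psiRels (hclique : ∀ i j : Fin k, i ≠ j → G.Adj (vv i) (vv j)) :
    ∀ r ∈ racgRels (gammaPrime G vv),
      FreeGroup.lift (fun x : ↥(RSet G vv) => (x : RACG G)) r = 1 := by
  rintro r (⟨x, rfl⟩ | ⟨x, y, hadj, rfl⟩)
  · simp only [map_mul, FreeGroup.lift_apply_of]
    obtain ⟨ε, v, hv, -, hx⟩ := x.2
    rw [hx]
    exact sandwich_sq (gw_mul_self hclique ε) (of_mul_self v)
  · simp only [map_pow, map_mul, FreeGroup.lift_apply_of]
    obtain ⟨-, ε, u, u', hu, hu', huu', hx, hy⟩ := hadj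
    rw [hx, hy]
    exact sandwich_pair_sq (gw_mul_self hclique ε) (adj_relator huu')

/-- the homomorphism `W_{Γ'} →* W_Γ` -/
noncomputable def psiHom (hclique : ∀ i j : Fin k, i ≠ j → G.Adj (vv i) (vv j)) :
    RACG (gammaPrime G vv) →* RACG G :=
  PresentedGroup.toGroup (psiRels hclique)

lemma psiHom_of (x : ↥(RSet G vv)) : psiHom hclique (of x) = (x : RACG G) :=
  PresentedGroup.toGroup.of _

/-- conjugating a vertex of `Γ'` by `g(ε₀)` -/
noncomputable def cSub (hinj : Function.Injective vv)
    (hclique : ∀ i j : Fin k, i ≠ j → G.Adj (vv i) (vv j))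
    (ε₀ : Fin k → ZMod 2) (x : ↥(RSet G vv)) : ↥(RSet G vv) :=
  ⟨gw G vv ε₀ * x * gw G vv ε₀, conj_mem_RSet hinj hclique ε₀ x.2⟩

lemma cSub_cSub (ε₀ ε₁ : Fin k → ZMod 2) (x : ↥(RSet G vv)) :
    cSub hinj hclique ε₀ (cSub hinj hclique ε₁ x) = cSub hinj hclique (ε₀ + ε₁) x := by
  apply Subtype.ext
  show gw G vv ε₀ * (gw G vv ε₁ * x * gw G vv ε₁) * gw G vv ε₀ =
    gw G vv (ε₀ + ε₁) * x * gw G vv (ε₀ + ε₁)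
  exact conj_gw_sandwich hclique ε₀ ε₁ x

lemma cSub_zero (x : ↥(RSet G vv)) : cSub hinj hclique 0 x = x := by
  apply Subtype.ext
  show gw G vv 0 * x * gw G vv 0 = x
  rw [gw_zero, one_mul, mul_one]

lemma cRels (ε₀ : Fin k → ZMod 2) :
    ∀ r ∈ racgRels (gammaPrime G vv),
      FreeGroup.lift (fun x : ↥(RSet G vv) =>
        (of (cSub hinj hclique ε₀ x) : RACG (gammaPrime G vv))) r = 1 := by
  rintro r (⟨x, rfl⟩ | ⟨x, y, hadj, rfl⟩)
  · simp only [map_mul, FreeGroup.lift_apply_of]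
    exact of_mul_self _
  · simp only [map_pow, map_mul, FreeGroup.lift_apply_of]
    apply adj_relator
    obtain ⟨hne, ε, u, u', hu, hu', huu', hx, hy⟩ := hadj
    constructor
    · intro hc
      apply hne
      have := Subtype.ext_iff.1 hc
      have h2 : (x : RACG G) = (y : RACG G) := by
        have h3 : gw G vv ε₀ * x * gw G vv ε₀ = gw G vv ε₀ * y * gw G vv ε₀ := this
        have h4 := mul_right_cancel h3
        exact mul_left_cancel h4
      exact Subtype.ext h2
    · refine ⟨ε₀ + ε, u, u', hu, hu', huu', ?_, ?_⟩
      · show gw G vv ε₀ * x * gw G vv ε₀ = _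
        rw [hx]
        exact conj_gw_sandwich hclique ε₀ ε (of u)
      · show gw G vv ε₀ * y * gw G vv ε₀ = _
        rw [hy]
        exact conj_gw_sandwich hclique ε₀ ε (of u')

/-- conjugation by `g(ε₀)` as an endomorphism of `W_{Γ'}` -/
noncomputable def cHom (ε₀ : Fin k → ZMod 2) :
    RACG (gammaPrime G vv) →* RACG (gammaPrime G vv) :=
  PresentedGroup.toGroup (cRels hinj hclique ε₀)

lemma cHom_of (ε₀ : Fin k → ZMod 2) (x : ↥(RSet G vv)) :
    cHom hinj hclique ε₀ (of x) = of (cSub hinj hclique ε₀ x) :=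
  PresentedGroup.toGroup.of _

lemma cHom_cHom (ε₀ ε₁ : Fin k → ZMod 2) (g : RACG (gammaPrime G vv)) :
    cHom hinj hclique ε₀ (cHom hinj hclique ε₁ g) = cHom hinj hclique (ε₀ + ε₁) g := by
  have : (cHom hinj hclique ε₀).comp (cHom hinj hclique ε₁) =
      cHom hinj hclique (ε₀ + ε₁) := by
    apply PresentedGroup.ext
    intro x
    show cHom hinj hclique ε₀ (cHom hinj hclique ε₁ (of x)) = _
    rw [cHom_of, cHom_of, cHom_of, cSub_cSub]
  exact DFunLike.congr_fun this g

lemma cHom_zero (g : RACG (gammaPrime G vv)) : cHom hinj hclique 0 g = g := by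
  have : cHom hinj hclique (vv := vv) 0 = MonoidHom.id _ := by
    apply PresentedGroup.ext
    intro x
    rw [cHom_of, cSub_zero]
    rfl
  rw [this]
  rfl

/-- conjugation as an automorphism -/
noncomputable def cAut (ε₀ : Fin k → ZMod 2) : MulAut (RACG (gammaPrime G vv)) where
  toFun := cHom hinj hclique ε₀
  invFun := cHom hinj hclique ε₀
  left_inv g := by
    rw [cHom_cHom, avec_add_self, cHom_zero]
  right_inv g := by
    rw [cHom_cHom, avec_add_self, cHom_zero]
  map_mul' := (cHom hinj hclique ε₀).map_mul

/-- the action of `(ℤ/2)ᵏ` on `W_{Γ'}` -/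
noncomputable def alphaHom :
    Multiplicative (Avec k) →* MulAut (RACG (gammaPrime G vv)) :=
  MonoidHom.mk' (fun q => cAut hinj hclique q.toAdd) (by
    intro a b
    apply MulEquiv.ext
    intro g
    show cHom hinj hclique _ g = cHom hinj hclique _ (cHom hinj hclique _ g)
    rw [cHom_cHom]
    rfl)

end Assembly

end RacgAux
namespace RacgAux

open PresentedGroup SemidirectProduct

variable {V : Type} {G : SimpleGraph V} {k : ℕ} {vv : Fin k → V}

lemma sd_swap {N H : Type*} [Group N] [Group H] {φ : H →* MulAut N} (q : H) (n : N) :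
    (inr q * inl n : N ⋊[φ] H) = inl (φ q n) * inr q := by
  rw [SemidirectProduct.inl_aut, map_inv]
  group

lemma aut_invol {N H : Type*} [Group N] [Group H] {φ : H →* MulAut N} {q : H}
    (hq : q * q = 1) (n : N) : φ q (φ q n) = n := by
  rw [← MulAut.mul_apply, ← map_mul, hq, map_one]
  rfl

lemma sd_mixed_sq {N H : Type*} [Group N] [Group H] {φ : H →* MulAut N} {q : H} {n : N}
    (hq : q * q = 1) (hn : φ q n * n = 1) :
    (inr q * inl n : N ⋊[φ] H) ^ 2 = 1 := by
  rw [pow_two, sd_swap]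
  calc (inl (φ q n) * inr q : N ⋊[φ] H) * (inl (φ q n) * inr q)
      = inl (φ q n) * (inr q * inl (φ q n)) * inr q := by group
    _ = inl (φ q n) * (inl (φ q (φ q n)) * inr q) * inr q := by rw [sd_swap]
    _ = inl (φ q n) * inl (φ q (φ q n)) * (inr q * inr q) := by group
    _ = inl (φ q n) * inl n * inr (q * q) := by rw [aut_invol hq, map_mul]
    _ = inl (φ q n * n) := by rw [hq, map_one, mul_one, map_mul]
    _ = 1 := by rw [hn, map_one]

lemma sd_mixed_sq' {N H : Type*} [Group N] [Group H] {φ : H →* MulAut N} {q : H} {n : N}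
    (hq : q * q = 1) (hn : n * φ q n = 1) :
    (inl n * inr q : N ⋊[φ] H) ^ 2 = 1 := by
  rw [pow_two]
  calc (inl n * inr q : N ⋊[φ] H) * (inl n * inr q)
      = inl n * (inr q * inl n) * inr q := by group
    _ = inl n * (inl (φ q n) * inr q) * inr q := by rw [sd_swap]
    _ = inl n * inl (φ q n) * (inr q * inr q) := by group
    _ = inl (n * φ q n) * inr (q * q) := by rw [map_mul, map_mul]
    _ = 1 := by rw [hn, hq, map_one, map_one, one_mul]

lemma exp2_rels {H : Type*} [CommGroup H] (hH : ∀ h : H, h * h = 1) (f : V → H) :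
    ∀ r ∈ racgRels G, FreeGroup.lift f r = 1 := by
  rintro r (⟨u, rfl⟩ | ⟨u, u', -, rfl⟩)
  · simp only [map_mul, FreeGroup.lift_apply_of]
    exact hH _
  · simp only [map_pow, map_mul, FreeGroup.lift_apply_of]
    rw [mul_pow, pow_two, pow_two, hH, hH, one_mul]

lemma mult_zmod2_sq (h : Multiplicative (ZMod 2)) : h * h = 1 := by revert h; decide

lemma of_ne_of {u u' : V} (hne : u ≠ u') : (of u : RACG G) ≠ of u' := by
  classical
  intro h
  set χ : RACG G →* Multiplicative (ZMod 2) :=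
    PresentedGroup.toGroup (exp2_rels mult_zmod2_sq
      (fun w => Multiplicative.ofAdd (if w = u then (1 : ZMod 2) else 0))) with hχ
  have h1 : χ (of u) = Multiplicative.ofAdd (1 : ZMod 2) := by
    rw [hχ, PresentedGroup.toGroup.of, if_pos rfl]
  have h2 : χ (of u') = Multiplicative.ofAdd (0 : ZMod 2) := by
    rw [hχ, PresentedGroup.toGroup.of, if_neg (Ne.symm hne)]
  rw [h, h2] at h1
  exact absurd h1 (by decide)

lemma mult_avec_sq (q : Multiplicative (Avec k)) : q * q = 1 := by
  rw [← ofAdd_toAdd q, ← ofAdd_add, avec_add_self]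
  rfl

section Lam

variable (hinj : Function.Injective vv)
  (hclique : ∀ i j : Fin k, i ≠ j → G.Adj (vv i) (vv j))

open scoped Classical in
/-- generator images for `Λ : W_Γ →* W_{Γ'} ⋊ (ℤ/2)ᵏ` -/
noncomputable def lamLetter : V →
    RACG (gammaPrime G vv) ⋊[alphaHom hinj hclique] Multiplicative (Avec k) := fun u =>
  if h : ∃ i, vv i = u then inr (Multiplicative.ofAdd (Pi.single h.choose 1))
  else inl (of (⟨of u, of_mem_RSet hinj hclique h⟩ : ↥(RSet G vv)))

lemma lamLetter_vv (i : Fin k) :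
    lamLetter hinj hclique (vv i) = inr (Multiplicative.ofAdd (Pi.single i 1)) := by
  unfold lamLetter
  have h : ∃ j, vv j = vv i := ⟨i, rfl⟩
  rw [dif_pos h]
  have : h.choose = i := hinj h.choose_spec
  rw [this]

lemma lamLetter_notin {u : V} (hu : u ∉ Set.range vv) :
    lamLetter hinj hclique u =
      inl (of (⟨of u, of_mem_RSet hinj hclique hu⟩ : ↥(RSet G vv))) := by
  exact dif_neg hu

lemma cSub_absorb {i : Fin k} {u : V} (hu : u ∉ Set.range vv) (hadj : G.Adj (vv i) u) :
    cSub hinj hclique (Pi.single i 1) ⟨of u, of_mem_RSet hinj hclique hu⟩ =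
      ⟨of u, of_mem_RSet hinj hclique hu⟩ := by
  apply Subtype.ext
  show gw G vv (Pi.single i 1) * of u * gw G vv (Pi.single i 1) = of u
  rw [gw_single, (of_comm hadj).eq, mul_assoc, of_mul_self, mul_one]

lemma lamRels : ∀ r ∈ racgRels G,
    FreeGroup.lift (lamLetter hinj hclique) r = 1 := by
  rintro r (⟨u, rfl⟩ | ⟨u, u', hadj, rfl⟩)
  · simp only [map_mul, FreeGroup.lift_apply_of]
    by_cases h : ∃ i, vv i = u
    · obtain ⟨i, rfl⟩ := h
      rw [lamLetter_vv, ← map_mul, mult_avec_sq, map_one]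
    · rw [lamLetter_notin hinj hclique h, ← map_mul, of_mul_self, map_one]
  · simp only [map_pow, map_mul, FreeGroup.lift_apply_of]
    by_cases h : ∃ i, vv i = u <;> by_cases h' : ∃ i, vv i = u'
    · obtain ⟨i, rfl⟩ := h
      obtain ⟨j, rfl⟩ := h'
      rw [lamLetter_vv, lamLetter_vv, ← map_mul, ← map_pow, pow_two, mult_avec_sq,
        map_one]
    · obtain ⟨i, rfl⟩ := h
      rw [lamLetter_vv, lamLetter_notin hinj hclique h']
      apply sd_mixed_sq (mult_avec_sq _)
      show (alphaHom hinj hclique) _ _ * _ = 1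
      have : (alphaHom hinj hclique) (Multiplicative.ofAdd (Pi.single i 1))
          (of (⟨of u', of_mem_RSet hinj hclique h'⟩ : ↥(RSet G vv))) =
          of (cSub hinj hclique (Pi.single i 1) ⟨of u', of_mem_RSet hinj hclique h'⟩) := by
        exact cHom_of hinj hclique _ _
      rw [this, cSub_absorb hinj hclique h' hadj]
      exact of_mul_self _
    · obtain ⟨j, rfl⟩ := h'
      rw [lamLetter_vv, lamLetter_notin hinj hclique h]
      apply sd_mixed_sq' (mult_avec_sq _)
      have : (alphaHom hinj hclique) (Multiplicative.ofAdd (Pi.single j 1))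
          (of (⟨of u, of_mem_RSet hinj hclique h⟩ : ↥(RSet G vv))) =
          of (cSub hinj hclique (Pi.single j 1) ⟨of u, of_mem_RSet hinj hclique h⟩) := by
        exact cHom_of hinj hclique _ _
      show _ * (alphaHom hinj hclique) _ _ = 1
      rw [this, cSub_absorb hinj hclique h hadj.symm]
      exact of_mul_self _
    · rw [lamLetter_notin hinj hclique h, lamLetter_notin hinj hclique h', ← map_mul,
        ← map_pow]
      have hne : (⟨of u, of_mem_RSet hinj hclique h⟩ : ↥(RSet G vv)) ≠
          ⟨of u', of_mem_RSet hinj hclique h'⟩ := by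
        intro hc
        exact of_ne_of hadj.ne (Subtype.ext_iff.1 hc)
      have hadj' : (gammaPrime G vv).Adj ⟨of u, of_mem_RSet hinj hclique h⟩
          ⟨of u', of_mem_RSet hinj hclique h'⟩ := by
        refine ⟨hne, 0, u, u', h, h', hadj, ?_, ?_⟩ <;>
          (show (of _ : RACG G) = gw G vv 0 * of _ * gw G vv 0;
            rw [gw_zero, one_mul, mul_one])
      rw [adj_relator hadj', map_one]

/-- the homomorphism `Λ : W_Γ →* W_{Γ'} ⋊ (ℤ/2)ᵏ` -/
noncomputable def lamHom :
    RACG G →* RACG (gammaPrime G vv) ⋊[alphaHom hinj hclique] Multiplicative (Avec k) :=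
  PresentedGroup.toGroup (lamRels hinj hclique)

lemma lamHom_of (u : V) : lamHom hinj hclique (of u) = lamLetter hinj hclique u :=
  PresentedGroup.toGroup.of _

lemma lamHom_gw (ε : Fin k → ZMod 2) :
    lamHom hinj hclique (gw G vv ε) = inr (Multiplicative.ofAdd ε) := by
  rw [map_gw (lamHom hinj hclique) inr ε]
  intro i hi
  rw [lamHom_of, lamLetter_vv]

/-- the section `(ℤ/2)ᵏ →* W_Γ` -/
noncomputable def kapHom (hclique : ∀ i j : Fin k, i ≠ j → G.Adj (vv i) (vv j)) :
    Multiplicative (Avec k) →* RACG G :=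
  MonoidHom.mk' (fun q => gw G vv q.toAdd) (by
    intro a b
    show gw G vv (a.toAdd + b.toAdd) = _
    rw [← gw_mul_gw hclique])

/-- the inverse homomorphism `μ` -/
noncomputable def muHom :
    RACG (gammaPrime G vv) ⋊[alphaHom hinj hclique] Multiplicative (Avec k) →* RACG G :=
  SemidirectProduct.lift (psiHom hclique) (kapHom hclique) (by
    intro q
    apply PresentedGroup.ext
    intro x
    show psiHom hclique ((alphaHom hinj hclique q) (of x)) =
      MulAut.conj (kapHom hclique q) (psiHom hclique (of x))
    rw [show (alphaHom hinj hclique q) (of x) =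
      of (cSub hinj hclique q.toAdd x) from cHom_of hinj hclique _ _]
    rw [psiHom_of, psiHom_of]
    show (gw G vv q.toAdd * x * gw G vv q.toAdd : RACG G) =
      gw G vv q.toAdd * x * (gw G vv q.toAdd)⁻¹
    rw [gw_inv hclique])

lemma mu_lam : (muHom hinj hclique).comp (lamHom hinj hclique) = MonoidHom.id (RACG G) := by
  apply PresentedGroup.ext
  intro u
  show muHom hinj hclique (lamHom hinj hclique (of u)) = of u
  rw [lamHom_of]
  by_cases h : ∃ i, vv i = u
  · obtain ⟨i, rfl⟩ := h
    rw [lamLetter_vv]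
    unfold muHom
    rw [SemidirectProduct.lift_inr]
    show gw G vv (Multiplicative.toAdd (Multiplicative.ofAdd (Pi.single i 1))) = _
    rw [toAdd_ofAdd, gw_single]
  · rw [lamLetter_notin hinj hclique h]
    unfold muHom
    rw [SemidirectProduct.lift_inl, psiHom_of]

lemma lam_psi : (lamHom hinj hclique).comp (psiHom hclique) =
    (inl : RACG (gammaPrime G vv) →* _) := by
  apply PresentedGroup.ext
  intro x
  show lamHom hinj hclique (psiHom hclique (of x)) = inl (of x)
  rw [psiHom_of]
  obtain ⟨ε, v, hv, -, hx⟩ := x.2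
  rw [show (x : RACG G) = gw G vv ε * of v * gw G vv ε from hx]
  rw [map_mul, map_mul, lamHom_gw, lamHom_of, lamLetter_notin hinj hclique hv]
  rw [sd_swap, mul_assoc, ← map_mul, mult_avec_sq, map_one, mul_one]
  have h1 : (alphaHom hinj hclique (Multiplicative.ofAdd ε))
      (of (⟨of v, of_mem_RSet hinj hclique hv⟩ : ↥(RSet G vv))) =
      of (cSub hinj hclique ε ⟨of v, of_mem_RSet hinj hclique hv⟩) := by
    have := cHom_of hinj hclique (Multiplicative.toAdd (Multiplicative.ofAdd ε))
      (⟨of v, of_mem_RSet hinj hclique hv⟩ : ↥(RSet G vv))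
    rw [toAdd_ofAdd] at this
    exact this
  rw [h1]
  congr 2
  apply Subtype.ext
  show gw G vv ε * of v * gw G vv ε = (x : RACG G)
  exact hx.symm

end Lam

end RacgAux
namespace RacgAux

open PresentedGroup SemidirectProduct

variable {V : Type} {k : ℕ} {vv : Fin k → V}

section Theta

variable (G : SimpleGraph V)

/-- generator images for the abelianisation `W_K →* (ℤ/2)ᵏ` -/
noncomputable def thetaLetter (vv : Fin k → V) :
    ↥(Set.range vv) → Multiplicative (Avec k) := fun s =>
  Multiplicative.ofAdd (Pi.single s.2.choose 1)

/-- the isomorphism `W_K →* (ℤ/2)ᵏ` -/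
noncomputable def thetaHom :
    RACG (G.induce (Set.range vv)) →* Multiplicative (Avec k) :=
  PresentedGroup.toGroup (exp2_rels mult_avec_sq (thetaLetter vv))

lemma thetaHom_of (s : ↥(Set.range vv)) :
    thetaHom G (of s) = Multiplicative.ofAdd (Pi.single s.2.choose 1) :=
  PresentedGroup.toGroup.of _

lemma thetaHom_of_vv (hinj : Function.Injective vv) (i : Fin k)
    (p : vv i ∈ Set.range vv) :
    thetaHom G (of (⟨vv i, p⟩ : ↥(Set.range vv))) =
      Multiplicative.ofAdd (Pi.single i 1) := by
  rw [thetaHom_of]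
  have : (⟨vv i, p⟩ : ↥(Set.range vv)).2.choose = i := hinj p.choose_spec
  rw [this]

/-- the clique generators inside the induced graph -/
def vvK (vv : Fin k → V) : Fin k → ↥(Set.range vv) := fun i => ⟨vv i, Set.mem_range_self i⟩

lemma hcliqueK (hclique : ∀ i j : Fin k, i ≠ j → G.Adj (vv i) (vv j)) :
    ∀ i j : Fin k, i ≠ j → (G.induce (Set.range vv)).Adj (vvK vv i) (vvK vv j) := by
  intro i j hij
  exact hclique i j hij

/-- the section `(ℤ/2)ᵏ →* W_K` -/
noncomputable def kapK (hclique : ∀ i j : Fin k, i ≠ j → G.Adj (vv i) (vv j)) :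
    Multiplicative (Avec k) →* RACG (G.induce (Set.range vv)) :=
  MonoidHom.mk' (fun q => gw (G.induce (Set.range vv)) (vvK vv) q.toAdd) (by
    intro a b
    show gw _ (vvK vv) (a.toAdd + b.toAdd) = _
    rw [← gw_mul_gw (hcliqueK G hclique)])

lemma kapK_theta (hclique : ∀ i j : Fin k, i ≠ j → G.Adj (vv i) (vv j)) :
    (kapK G hclique).comp (thetaHom G) =
      MonoidHom.id (RACG (G.induce (Set.range vv))) := by
  apply PresentedGroup.ext
  intro s
  show kapK G hclique (thetaHom G (of s)) = of s
  rw [thetaHom_of]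
  show gw _ (vvK vv) (Multiplicative.toAdd
    (Multiplicative.ofAdd (Pi.single s.2.choose 1))) = of s
  rw [toAdd_ofAdd, gw_single]
  exact congrArg of (Subtype.ext s.2.choose_spec)

lemma thetaHom_injective (hclique : ∀ i j : Fin k, i ≠ j → G.Adj (vv i) (vv j)) :
    Function.Injective (thetaHom G (vv := vv)) := by
  intro a b hab
  have h1 := DFunLike.congr_fun (kapK_theta G hclique) a
  have h2 := DFunLike.congr_fun (kapK_theta G hclique) b
  simp only [MonoidHom.comp_apply, MonoidHom.id_apply] at h1 h2
  rw [← h1, ← h2, hab]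

end Theta

end RacgAux

open RacgAux PresentedGroup SemidirectProduct

/-- the map `v(ε) ↦ g(ε) v g(ε)` extends to a group isomorphism
`W_{Γ'} ≃ ker φ`, where `φ : W_Γ →* W_K` is the retraction onto the clique
`K = {v₁, …, v_k}`; since `ker φ` has finite index in `W_Γ`, the groups `W_Γ` and `W_{Γ'}`
are commensurable. -/
theorem racg_gammaPrime_iso_ker {V : Type} [Fintype V] (G : SimpleGraph V)
    (k : ℕ) (vv : Fin k → V) (hinj : Function.Injective vv)
    (hclique : ∀ i j : Fin k, i ≠ j → G.Adj (vv i) (vv j))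
    (φ : RACG G →* RACG (G.induce (Set.range vv)))
    (hφ1 : ∀ i : Fin k, φ (PresentedGroup.of (vv i)) =
      PresentedGroup.of (⟨vv i, Set.mem_range_self i⟩ : ↥(Set.range vv)))
    (hφ2 : ∀ v : V, v ∉ Set.range vv → φ (PresentedGroup.of v) = 1) :
    (∃ e : RACG (gammaPrime G vv) ≃* φ.ker,
      ∀ x : ↥(RSet G vv), ((e (PresentedGroup.of x) : φ.ker) : RACG G) = (x : RACG G)) ∧
    φ.ker.FiniteIndex := by

  classical
  constructor
  · -- the isomorphism
    have hPsiKer : ∀ g, psiHom hclique g ∈ φ.ker := by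
      have hcomp : φ.comp (psiHom hclique) = 1 := by
        apply PresentedGroup.ext
        intro x
        show φ (psiHom hclique (of x)) = 1
        rw [psiHom_of]
        obtain ⟨ε, v, hv, -, hx⟩ := x.2
        rw [show (x : RACG G) = gw G vv ε * PresentedGroup.of v * gw G vv ε from hx]
        rw [map_mul, map_mul, hφ2 v hv, mul_one, ← map_mul, gw_mul_self hclique, map_one]
      intro g
      have := DFunLike.congr_fun hcomp g
      simpa using this
    set ΨK : RACG (gammaPrime G vv) →* φ.ker :=
      (psiHom hclique).codRestrict φ.ker hPsiKer with hΨK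
    have hval : ∀ g, ((ΨK g : φ.ker) : RACG G) = psiHom hclique g := fun g => rfl
    have hinjΨ : Function.Injective ΨK := by
      intro a b hab
      have hab' : psiHom hclique a = psiHom hclique b := by
        rw [← hval a, ← hval b, hab]
      have h1 := DFunLike.congr_fun (lam_psi hinj hclique) a
      have h2 := DFunLike.congr_fun (lam_psi hinj hclique) b
      simp only [MonoidHom.comp_apply] at h1 h2
      have h3 : (inl a : RACG (gammaPrime G vv) ⋊[alphaHom hinj hclique]
          Multiplicative (Avec k)) = inl b := by
        rw [← h1, ← h2, hab']
      exact SemidirectProduct.inl_injective h3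
    have hrl : (SemidirectProduct.rightHom).comp (lamHom hinj hclique) =
        (thetaHom G).comp φ := by
      apply PresentedGroup.ext
      intro u
      show SemidirectProduct.rightHom (lamHom hinj hclique (of u)) = thetaHom G (φ (of u))
      rw [lamHom_of]
      by_cases h : ∃ i, vv i = u
      · obtain ⟨i, rfl⟩ := h
        rw [lamLetter_vv, rightHom_inr, hφ1 i, thetaHom_of_vv G hinj]
      · rw [lamLetter_notin hinj hclique h, rightHom_inl, hφ2 u h, map_one]
    have hsurjΨ : Function.Surjective ΨK := by
      intro y
      have hy : φ (y : RACG G) = 1 := y.2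
      have hright : (lamHom hinj hclique (y : RACG G)).right = 1 := by
        have := DFunLike.congr_fun hrl (y : RACG G)
        simp only [MonoidHom.comp_apply] at this
        rw [hy, map_one] at this
        exact this
      have hdecomp : lamHom hinj hclique (y : RACG G) =
          inl ((lamHom hinj hclique (y : RACG G)).left) := by
        conv_lhs => rw [← SemidirectProduct.inl_left_mul_inr_right
          (lamHom hinj hclique (y : RACG G))]
        have h1 : (inr ((lamHom hinj hclique (y : RACG G)).right) :
            RACG (gammaPrime G vv) ⋊[alphaHom hinj hclique] Multiplicative (Avec k)) = 1 := by
          rw [hright]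
          exact map_one inr
        rw [h1, mul_one]
      refine ⟨(lamHom hinj hclique (y : RACG G)).left, ?_⟩
      apply Subtype.ext
      rw [hval]
      have hml := DFunLike.congr_fun (mu_lam hinj hclique) (y : RACG G)
      simp only [MonoidHom.comp_apply, MonoidHom.id_apply] at hml
      calc psiHom hclique ((lamHom hinj hclique (y : RACG G)).left)
          = muHom hinj hclique (inl ((lamHom hinj hclique (y : RACG G)).left)) := by
            unfold muHom
            rw [SemidirectProduct.lift_inl]
        _ = muHom hinj hclique (lamHom hinj hclique (y : RACG G)) := by rw [← hdecomp]
        _ = (y : RACG G) := hml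
    refine ⟨MulEquiv.ofBijective ΨK ⟨hinjΨ, hsurjΨ⟩, ?_⟩
    intro x
    show ((ΨK (of x) : φ.ker) : RACG G) = (x : RACG G)
    rw [hval, psiHom_of]
  · -- finite index
    haveI : Finite (Multiplicative (Avec k)) :=
      Finite.of_equiv (Avec k) Multiplicative.ofAdd
    haveI : Finite (RACG (G.induce (Set.range vv))) :=
      Finite.of_injective (thetaHom G) (thetaHom_injective G hclique)
    exact Subgroup.finiteIndex_ker φ
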